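/- For n ≥ 1, if two families (T^a) and (T_m) of functions ℤ→F satisfy T^0 = T_0 = 1 and the convolution identity Σ_{k=0}^{n} (-1)^k T^{k}(u + 2n - k - 1)·T_{n-k}(u + n - k - 1) = 0 for all n ≥ 1 and all u, then each T_n is uniquely determined by (T^1,…,T^n) and equals the n×n determinant T_n(u+n-1) = det_{1≤i,j≤n}( T^{1 + j - i}(shift_{ij}(u)) ) for suitable integer shifts shift_{ij}, i.e., the Giambelli/Jacobi–Trudi inversion holds for such shifted convolution families. -/

import Mathlib

open Finset Matrix

private def Bm {F : Type*} [Field F] (Ta : ℤ → ℤ → F) (m : ℕ) (u : ℤ) :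
    Matrix (Fin m) (Fin m) F :=
  Matrix.of fun a b : Fin m => Ta (1 + (b : ℤ) - (a : ℤ)) (u + (a : ℤ) + (b : ℤ))

private lemma succAbove_val {n : ℕ} (i : Fin (n + 1)) (j : Fin n) :
    ((i.succAbove j : Fin (n + 1)) : ℕ) = if (j : ℕ) < (i : ℕ) then (j : ℕ) else (j : ℕ) + 1 := by
  rcases lt_or_ge ((j : ℕ)) (i : ℕ) with h | h
  · rw [Fin.succAbove_of_castSucc_lt i j (by simpa [Fin.lt_def] using h)]
    simp [h]
  · rw [Fin.succAbove_of_le_castSucc i j (by simpa [Fin.le_def] using h)]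
    simp [Nat.not_lt.mpr h]

private lemma minor_det {F : Type*} [Field F] (Ta : ℤ → ℤ → F)
    (hTa0 : ∀ u, Ta 0 u = 1) (hTaneg : ∀ k : ℤ, k < 0 → ∀ u, Ta k u = 0)
    (n : ℕ) (u : ℤ) (i : Fin (n + 1)) :
    ((Bm Ta (n + 1) u).submatrix i.succAbove Fin.castSucc).det = (Bm Ta (i : ℕ) u).det := by
  have hi : (i : ℕ) ≤ n := Fin.is_le i
  have hsum : (i : ℕ) + (n - (i : ℕ)) = n := by omega
  set e : Fin (i : ℕ) ⊕ Fin (n - (i : ℕ)) ≃ Fin n := finSumFinEquiv.trans (finCongr hsum) with he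
  have hval1 : ∀ a : Fin (i : ℕ), ((e (Sum.inl a)) : ℕ) = (a : ℕ) := by
    intro a; simp [he, finSumFinEquiv]
  have hval2 : ∀ b : Fin (n - (i : ℕ)), ((e (Sum.inr b)) : ℕ) = (i : ℕ) + (b : ℕ) := by
    intro b; simp [he, finSumFinEquiv]
  rw [← Matrix.det_submatrix_equiv_self e, Matrix.submatrix_submatrix]
  set M := (Bm Ta (n + 1) u).submatrix (i.succAbove ∘ e) (Fin.castSucc ∘ e) with hM
  rw [← Matrix.fromBlocks_toBlocks M]
  have h21 : M.toBlocks₂₁ = 0 := by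
    ext b a
    have hrow : ((i.succAbove (e (Sum.inr b))) : ℕ) = (i : ℕ) + (b : ℕ) + 1 := by
      rw [succAbove_val, hval2]; simp
    simp only [Matrix.toBlocks₂₁, hM, Matrix.submatrix_apply, Function.comp_apply,
      Matrix.of_apply, Bm, Matrix.zero_apply]
    apply hTaneg
    rw [Fin.coe_castSucc, hval1, hrow]
    have : (a : ℕ) < (i : ℕ) := a.isLt
    push_cast
    omega
  rw [h21, Matrix.det_fromBlocks_zero₂₁]
  have h11 : M.toBlocks₁₁ = Bm Ta (i : ℕ) u := by
    ext a b
    have hrow : ((i.succAbove (e (Sum.inl a))) : ℕ) = (a : ℕ) := by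
      rw [succAbove_val, hval1]; simp [a.isLt]
    simp only [Matrix.toBlocks₁₁, hM, Matrix.submatrix_apply, Function.comp_apply,
      Matrix.of_apply, Bm]
    rw [Fin.coe_castSucc, hval1, hrow]
  have h22 : M.toBlocks₂₂.det = 1 := by
    rw [Matrix.det_of_upperTriangular]
    · apply Finset.prod_eq_one
      intro b _
      have hrow : ((i.succAbove (e (Sum.inr b))) : ℕ) = (i : ℕ) + (b : ℕ) + 1 := by
        rw [succAbove_val, hval2]; simp
      simp only [Matrix.toBlocks₂₂, hM, Matrix.submatrix_apply, Function.comp_apply,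
        Matrix.of_apply, Bm]
      rw [Fin.coe_castSucc, hval2, hrow]
      have h0 : (1 : ℤ) + (((i : ℕ) + (b : ℕ) : ℕ) : ℤ) - (((i : ℕ) + (b : ℕ) + 1 : ℕ) : ℤ) = 0 := by
        push_cast; ring
      rw [h0, hTa0]
    · intro b b' hlt
      have hrow : ((i.succAbove (e (Sum.inr b))) : ℕ) = (i : ℕ) + (b : ℕ) + 1 := by
        rw [succAbove_val, hval2]; simp
      simp only [Matrix.toBlocks₂₂, hM, Matrix.submatrix_apply, Function.comp_apply,
        Matrix.of_apply, Bm]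
      apply hTaneg
      rw [Fin.coe_castSucc, hval2, hrow]
      have : (b' : ℕ) < (b : ℕ) := hlt
      push_cast
      omega
  rw [h11, h22, mul_one]

private lemma key_exp {F : Type*} [Field F] (Ta : ℤ → ℤ → F)
    (hTa0 : ∀ u, Ta 0 u = 1) (hTaneg : ∀ k : ℤ, k < 0 → ∀ u, Ta k u = 0)
    (n : ℕ) (u : ℤ) :
    (Bm Ta (n + 1) u).det =
      ∑ i : Fin (n + 1),
        (-1 : F) ^ ((i : ℕ) + n) * Ta (1 + (n : ℤ) - (i : ℤ)) (u + (i : ℤ) + (n : ℤ)) *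
          (Bm Ta (i : ℕ) u).det := by
  rw [Matrix.det_succ_column (Bm Ta (n + 1) u) (Fin.last n)]
  apply Finset.sum_congr rfl
  intro i _
  rw [Fin.succAbove_last, minor_det Ta hTa0 hTaneg n u i]
  simp [Bm, Fin.last]

private lemma Dorth {F : Type*} [Field F] (Ta : ℤ → ℤ → F)
    (hTa0 : ∀ u, Ta 0 u = 1) (hTaneg : ∀ k : ℤ, k < 0 → ∀ u, Ta k u = 0)
    (m : ℕ) (u : ℤ) :
    ∑ k ∈ Finset.range (m + 2),
      (-1 : F) ^ k * Ta k (u + 2 * (m + 1 : ℕ) - k - 1) * (Bm Ta (m + 1 - k) u).det = 0 := by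
  rw [Finset.sum_range_succ']
  have hkey := key_exp Ta hTa0 hTaneg m u
  rw [Fin.sum_univ_eq_sum_range (fun i => (-1 : F) ^ (i + m) *
    Ta (1 + (m : ℤ) - (i : ℤ)) (u + (i : ℤ) + (m : ℤ)) * (Bm Ta i u).det) (m + 1)] at hkey
  rw [← Finset.sum_range_reflect] at hkey
  have hf0 : (-1 : F) ^ 0 * Ta ((0 : ℕ) : ℤ) (u + 2 * ((m + 1 : ℕ) : ℤ) - ((0 : ℕ) : ℤ) - 1) *
      (Bm Ta (m + 1 - 0) u).det = (Bm Ta (m + 1) u).det := by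
    simp [hTa0]
  rw [hf0, hkey, ← Finset.sum_add_distrib]
  apply Finset.sum_eq_zero
  intro k hk
  have hk' : k ≤ m := by have := Finset.mem_range.mp hk; omega
  have hc : ((m + 1 - 1 - k : ℕ) : ℤ) = (m : ℤ) - (k : ℤ) := by
    rw [show m + 1 - 1 - k = m - k from rfl]; push_cast [hk']; ring
  have hs : (-1 : F) ^ ((m + 1 - 1 - k) + m) = (-1 : F) ^ k := by
    have h2 : ((m + 1 - 1 - k) + m) + k = 2 * m := by omega
    have hprod : (-1 : F) ^ ((m + 1 - 1 - k) + m) * (-1 : F) ^ k = 1 := by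
      rw [← pow_add, h2, pow_mul]; norm_num
    have hb : (-1 : F) ^ k * (-1 : F) ^ k = 1 := by
      rw [← pow_add, ← two_mul, pow_mul]; norm_num
    calc (-1 : F) ^ ((m + 1 - 1 - k) + m)
        = (-1 : F) ^ ((m + 1 - 1 - k) + m) * ((-1 : F) ^ k * (-1 : F) ^ k) := by
          rw [hb, mul_one]
      _ = ((-1 : F) ^ ((m + 1 - 1 - k) + m) * (-1 : F) ^ k) * (-1 : F) ^ k := by ring
      _ = (-1 : F) ^ k := by rw [hprod, one_mul]
  have e2 : u + 2 * ((m + 1 : ℕ) : ℤ) - ((k + 1 : ℕ) : ℤ) - 1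
      = u + ((m + 1 - 1 - k : ℕ) : ℤ) + (m : ℤ) := by rw [hc]; push_cast; ring
  have e1 : ((k + 1 : ℕ) : ℤ) = 1 + (m : ℤ) - ((m + 1 - 1 - k : ℕ) : ℤ) := by
    rw [hc]; push_cast; ring
  have hB : (Bm Ta (m + 1 - (k + 1)) u).det = (Bm Ta (m + 1 - 1 - k) u).det := by
    rw [show m + 1 - (k + 1) = m + 1 - 1 - k from by omega]
  rw [e2, e1, hB, hs, pow_succ]
  ring

private lemma uniq {F : Type*} [Field F] (Ta Tm₁ Tm₂ : ℤ → ℤ → F)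
    (hTa0 : ∀ u, Ta 0 u = 1)
    (h₁0 : ∀ u, Tm₁ 0 u = 1) (h₂0 : ∀ u, Tm₂ 0 u = 1)
    (horth₁ : ∀ n : ℕ, 1 ≤ n → ∀ u : ℤ,
      ∑ k ∈ Finset.range (n + 1),
        (-1 : F) ^ k * Ta k (u + 2 * n - k - 1) * Tm₁ ((n : ℤ) - k) (u + n - k - 1) = 0)
    (horth₂ : ∀ n : ℕ, 1 ≤ n → ∀ u : ℤ,
      ∑ k ∈ Finset.range (n + 1),
        (-1 : F) ^ k * Ta k (u + 2 * n - k - 1) * Tm₂ ((n : ℤ) - k) (u + n - k - 1) = 0) :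
    ∀ n : ℕ, ∀ u : ℤ, Tm₁ (n : ℤ) u = Tm₂ (n : ℤ) u := by
  intro n
  induction n using Nat.strong_induction_on with
  | _ n IH =>
    match n, IH with
    | 0, _ => intro u; rw [Nat.cast_zero, h₁0, h₂0]
    | m + 1, IH =>
      intro u
      have H₁ := horth₁ (m + 1) (by omega) (u - m)
      have H₂ := horth₂ (m + 1) (by omega) (u - m)
      rw [Finset.sum_range_succ'] at H₁ H₂
      have hrest : ∀ k ∈ Finset.range (m + 1),
          (-1 : F) ^ (k + 1) * Ta ((k + 1 : ℕ) : ℤ)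
              (u - (m : ℤ) + 2 * ((m + 1 : ℕ) : ℤ) - ((k + 1 : ℕ) : ℤ) - 1) *
            Tm₁ (((m + 1 : ℕ) : ℤ) - ((k + 1 : ℕ) : ℤ))
              (u - (m : ℤ) + ((m + 1 : ℕ) : ℤ) - ((k + 1 : ℕ) : ℤ) - 1)
          = (-1 : F) ^ (k + 1) * Ta ((k + 1 : ℕ) : ℤ)
              (u - (m : ℤ) + 2 * ((m + 1 : ℕ) : ℤ) - ((k + 1 : ℕ) : ℤ) - 1) *
            Tm₂ (((m + 1 : ℕ) : ℤ) - ((k + 1 : ℕ) : ℤ))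
              (u - (m : ℤ) + ((m + 1 : ℕ) : ℤ) - ((k + 1 : ℕ) : ℤ) - 1) := by
        intro k hk
        have hk' : k ≤ m := by have := Finset.mem_range.mp hk; omega
        have hc : ((m + 1 : ℕ) : ℤ) - ((k + 1 : ℕ) : ℤ) = ((m - k : ℕ) : ℤ) := by
          push_cast [hk']; ring
        rw [hc, IH (m - k) (by omega)]
      rw [Finset.sum_congr rfl hrest] at H₁
      simp only [Nat.cast_zero, pow_zero, sub_zero, hTa0, one_mul] at H₁ H₂
      have e2 : u - (m : ℤ) + ((m + 1 : ℕ) : ℤ) - 1 = u := by push_cast; ring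
      rw [e2] at H₁ H₂
      have : Tm₁ ((m + 1 : ℕ) : ℤ) u = Tm₂ ((m + 1 : ℕ) : ℤ) u := by
        linear_combination H₁ - H₂
      exact this


/-- if families `T^a, T_m : ℤ → F` with `T^0 = T_0 = 1` and vanishing in
negative index satisfy the shifted convolution identity
`Σ_{k=0}^{n} (-1)^k T^k(u+2n-k-1)·T_{n-k}(u+n-k-1) = 0` for all `n ≥ 1` and `u`, then
each `T_n` is uniquely determined by `(T^1,…,T^n)`, and the Giambelli/Jacobi–Trudi
inversion holds: `T_n(u+n-1) = det_{1≤i,j≤n}( T^{1+j-i}(u+i+j-2) )`. -/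
theorem stmt19 {F : Type*} [Field F] (Ta Tm : ℤ → ℤ → F)
    (hTa0 : ∀ u, Ta 0 u = 1) (hTm0 : ∀ u, Tm 0 u = 1)
    (hTaneg : ∀ k : ℤ, k < 0 → ∀ u, Ta k u = 0)
    (hTmneg : ∀ k : ℤ, k < 0 → ∀ u, Tm k u = 0)
    (horth : ∀ n : ℕ, 1 ≤ n → ∀ u : ℤ,
      ∑ k ∈ Finset.range (n + 1),
        (-1 : F) ^ k * Ta k (u + 2 * n - k - 1) * Tm ((n : ℤ) - k) (u + n - k - 1) = 0) :
    (∀ Tm' : ℤ → ℤ → F,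
      (∀ u, Tm' 0 u = 1) →
      (∀ k : ℤ, k < 0 → ∀ u, Tm' k u = 0) →
      (∀ n : ℕ, 1 ≤ n → ∀ u : ℤ,
        ∑ k ∈ Finset.range (n + 1),
          (-1 : F) ^ k * Ta k (u + 2 * n - k - 1) * Tm' ((n : ℤ) - k) (u + n - k - 1)
            = 0) →
      ∀ n : ℕ, ∀ u : ℤ, Tm' n u = Tm n u) ∧
    (∀ n : ℕ, 1 ≤ n → ∀ u : ℤ,
      Tm n (u + n - 1) =
        (Matrix.of fun i j : Fin n =>
          Ta (1 + (j : ℤ) - (i : ℤ)) (u + (i : ℤ) + (j : ℤ))).det) := by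
  constructor
  · intro Tm' h0' _ horth' n u
    exact uniq Ta Tm' Tm hTa0 h0' hTm0 horth' horth n u
  · intro n hn u
    set TmD : ℤ → ℤ → F := fun k v =>
      if h : 0 ≤ k then (Bm Ta k.toNat (v - k + 1)).det else 0 with hTmD
    have hD0 : ∀ v, TmD 0 v = 1 := by
      intro v
      simp only [hTmD, le_refl, dif_pos, Int.toNat_zero]
      exact Matrix.det_fin_zero
    have hDorth : ∀ n : ℕ, 1 ≤ n → ∀ u : ℤ,
        ∑ k ∈ Finset.range (n + 1),
          (-1 : F) ^ k * Ta k (u + 2 * n - k - 1) * TmD ((n : ℤ) - k) (u + n - k - 1) = 0 := by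
      intro n hn u
      obtain ⟨m, rfl⟩ : ∃ m, n = m + 1 := ⟨n - 1, by omega⟩
      refine Eq.trans (Finset.sum_congr rfl ?_) (Dorth Ta hTa0 hTaneg m u)
      intro k hk
      have hk' : k < m + 2 := Finset.mem_range.mp hk
      have h0 : (0 : ℤ) ≤ ((m + 1 : ℕ) : ℤ) - (k : ℤ) := by push_cast; omega
      have ht : (((m + 1 : ℕ) : ℤ) - (k : ℤ)).toNat = m + 1 - k := by omega
      have ha : u + ((m + 1 : ℕ) : ℤ) - (k : ℤ) - 1 - (((m + 1 : ℕ) : ℤ) - (k : ℤ)) + 1 = u := by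
        ring
      simp only [hTmD, dif_pos h0]
      rw [ht]
      congr 1
      rw [show u + ((m + 1 : ℕ) : ℤ) - ↑k - 1 - (((m + 1 : ℕ) : ℤ) - ↑k) + 1 = u from by ring]
    have huniq := uniq Ta Tm TmD hTa0 hTm0 hD0 horth hDorth n (u + (n : ℤ) - 1)
    rw [huniq]
    have h0 : (0 : ℤ) ≤ ((n : ℕ) : ℤ) := by positivity
    simp only [hTmD, dif_pos h0]
    rw [show u + (n : ℤ) - 1 - (n : ℤ) + 1 = u from by ring, Int.toNat_natCast]
    rfl
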